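/- The series Σ over all pairs of integers (m, n) ≠ (0, 0) of (m + n·e^{iπ/3})⁻⁶ converges absolutely, and its value is a real number that is strictly positive. -/

import Mathlib

open Finset

noncomputable def hexXi : ℂ := Complex.exp ((Real.pi : ℂ) * Complex.I / 3)

lemma hexXi_eq : hexXi = Complex.mk (1/2) (Real.sqrt 3 / 2) := by
  have h : ((Real.pi : ℂ) * Complex.I / 3) = ((Real.pi / 3 : ℝ) : ℂ) * Complex.I := by
    push_cast; ring
  rw [hexXi, h, Complex.exp_mul_I, ← Complex.ofReal_cos, ← Complex.ofReal_sin,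
    Real.cos_pi_div_three, Real.sin_pi_div_three]
  apply Complex.ext <;> simp <;> norm_num

lemma hexXi_sq : hexXi ^ 2 = hexXi - 1 := by
  rw [hexXi_eq]
  have h3 : Real.sqrt 3 ^ 2 = 3 := Real.sq_sqrt (by norm_num)
  apply Complex.ext <;>
    simp [pow_two, Complex.mul_re, Complex.mul_im, Complex.sub_re, Complex.sub_im] <;> nlinarith

lemma conj_hexXi : (starRingEnd ℂ) hexXi = 1 - hexXi := by
  rw [hexXi_eq]
  apply Complex.ext <;> simp <;> norm_num

/-- The lattice point. -/
noncomputable def hexW (p : ℤ × ℤ) : ℂ := (p.1 : ℂ) + (p.2 : ℂ) * hexXi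

/-- The quadratic form. -/
def hexQ (p : ℤ × ℤ) : ℤ := p.1 ^ 2 + p.1 * p.2 + p.2 ^ 2

lemma hexQ_pos {p : ℤ × ℤ} (hp : p ≠ (0, 0)) : 0 < hexQ p := by
  have : p.1 ≠ 0 ∨ p.2 ≠ 0 := by
    by_contra h
    push_neg at h
    exact hp (Prod.ext h.1 h.2)
  rcases this with h | h
  · have h1 := Int.one_le_abs h
    unfold hexQ; nlinarith [sq_abs p.1, sq_nonneg (p.1 + 2 * p.2), sq_nonneg |p.1|]
  · have h1 := Int.one_le_abs h
    unfold hexQ; nlinarith [sq_abs p.2, sq_nonneg (2 * p.1 + p.2), sq_nonneg |p.2|]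

lemma normSq_hexW (p : ℤ × ℤ) : Complex.normSq (hexW p) = (hexQ p : ℝ) := by
  have h3 : Real.sqrt 3 ^ 2 = 3 := Real.sq_sqrt (by norm_num)
  rw [hexW, hexXi_eq, Complex.normSq_apply]
  simp [Complex.add_re, Complex.add_im, Complex.mul_re, Complex.mul_im, hexQ]
  push_cast
  nlinarith [h3]

lemma norm_hexTerm (p : ℤ × ℤ) : ‖((hexW p) ^ 6)⁻¹‖ = (((hexQ p : ℝ)) ^ 3)⁻¹ := by
  rw [norm_inv, norm_pow, ← normSq_hexW]
  rw [← Complex.sq_norm]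
  ring_nf

lemma hexQ_ge (p : ℤ × ℤ) : (((max p.1.natAbs p.2.natAbs : ℕ)) : ℤ) ^ 2 ≤ 2 * hexQ p := by
  have e1 : (p.1.natAbs : ℤ) = |p.1| := (Int.abs_eq_natAbs _).symm
  have e2 : (p.2.natAbs : ℤ) = |p.2| := (Int.abs_eq_natAbs _).symm
  have hm : (((max p.1.natAbs p.2.natAbs : ℕ)) : ℤ) = max |p.1| |p.2| := by
    rw [Nat.cast_max, e1, e2]
  rw [hm]
  have h1 : (max |p.1| |p.2|) ^ 2 ≤ p.1 ^ 2 + p.2 ^ 2 := by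
    rcases max_cases |p.1| |p.2| with ⟨h, _⟩ | ⟨h, _⟩ <;> rw [h] <;>
      nlinarith [sq_abs p.1, sq_abs p.2, sq_nonneg p.1, sq_nonneg p.2]
  unfold hexQ; nlinarith [sq_nonneg (p.1 + p.2)]

lemma term_le_of_mem_box {p : ℤ × ℤ} {k : ℕ} (hk : k ≠ 0) (hp : p ∈ box k) :
    (((hexQ p : ℝ)) ^ 3)⁻¹ ≤ 8 / (k : ℝ) ^ 6 := by
  rw [Int.mem_box] at hp
  have hp0 : p ≠ (0, 0) := by
    rintro rfl; simp at hp; omega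
  have hQ1 : (1 : ℝ) ≤ (hexQ p : ℝ) := by exact_mod_cast hexQ_pos hp0
  have hQk : (k : ℝ) ^ 2 ≤ 2 * (hexQ p : ℝ) := by
    have h := hexQ_ge p
    rw [hp] at h
    exact_mod_cast h
  have hkey : (((k : ℝ) ^ 2) ^ 3) ≤ (2 * (hexQ p : ℝ)) ^ 3 :=
    pow_le_pow_left₀ (by positivity) hQk 3
  have hkpos : (0 : ℝ) < (k : ℝ) ^ 6 := by
    have : (1 : ℕ) ≤ k := Nat.one_le_iff_ne_zero.mpr hk
    have : (1 : ℝ) ≤ (k : ℝ) := by exact_mod_cast this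
    positivity
  rw [inv_eq_one_div, div_le_div_iff₀ (by positivity) hkpos]
  nlinarith [hkey]

lemma hexQ_nonneg (p : ℤ × ℤ) : 0 ≤ hexQ p := by
  unfold hexQ; nlinarith [sq_nonneg (p.1 + p.2), sq_nonneg p.1, sq_nonneg p.2]

lemma hex_step (x : ℝ) (hx : 0 ≤ x) :
    ((x + 3) ^ 5)⁻¹ ≤ (1/4) * ((x + 2) ^ 4)⁻¹ - (1/4) * ((x + 3) ^ 4)⁻¹ := by
  have h2 : (0:ℝ) < x + 2 := by linarith
  have h3 : (0:ℝ) < x + 3 := by linarith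
  rw [← sub_nonneg]
  have key : (1/4) * ((x + 2) ^ 4)⁻¹ - (1/4) * ((x + 3) ^ 4)⁻¹ - ((x + 3) ^ 5)⁻¹
      = (10*x^3 + 70*x^2 + 165*x + 131) / (4 * (x+2)^4 * (x+3)^5) := by
    field_simp
    ring
  rw [key]
  positivity

lemma sum_inv_pow5_le (N : ℕ) : ∑ k ∈ Finset.Icc 2 N, (((k:ℝ)) ^ 5)⁻¹ ≤ 3/64 := by
  suffices H : ∀ M : ℕ, ∑ k ∈ Finset.Icc 2 (M+2), (((k:ℝ)) ^ 5)⁻¹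
      ≤ 3/64 - (1/4) * (((M:ℝ) + 2) ^ 4)⁻¹ by
    match N with
    | 0 => norm_num
    | 1 => norm_num
    | (M+2) =>
      have h := H M
      have h2 : (0:ℝ) ≤ (1/4) * (((M:ℝ) + 2) ^ 4)⁻¹ := by positivity
      linarith
  intro M
  induction M with
  | zero =>
    rw [show (0:ℕ) + 2 = 2 from rfl, Finset.Icc_self, Finset.sum_singleton]
    norm_num
  | succ n ih =>
    have hstep := hex_step (n : ℝ) (by positivity)
    rw [show n + 1 + 2 = (n + 2) + 1 from rfl, Finset.sum_Icc_succ_top (by omega)]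
    push_cast
    push_cast at ih hstep
    have e1 : ((n:ℝ) + 2 + 1) = (n:ℝ) + 3 := by ring
    have e2 : ((n:ℝ) + 1 + 2) = (n:ℝ) + 3 := by ring
    rw [e1, e2]
    linarith

lemma box_sum_le {k : ℕ} (hk : k ≠ 0) :
    ∑ p ∈ (box k : Finset (ℤ × ℤ)), (((hexQ p : ℝ)) ^ 3)⁻¹ ≤ 64 * (((k:ℝ)) ^ 5)⁻¹ := by
  have h := Finset.sum_le_card_nsmul (box k : Finset (ℤ × ℤ)) _ (8 / (k : ℝ) ^ 6)
    (fun p hp => term_le_of_mem_box hk hp)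
  rw [Int.card_box hk] at h
  have hk1 : (1:ℝ) ≤ (k:ℝ) := by exact_mod_cast Nat.one_le_iff_ne_zero.mpr hk
  calc ∑ p ∈ (box k : Finset (ℤ × ℤ)), (((hexQ p : ℝ)) ^ 3)⁻¹
      ≤ (8 * k) • (8 / (k : ℝ) ^ 6) := h
    _ = 64 * (((k:ℝ)) ^ 5)⁻¹ := by
        rw [nsmul_eq_mul]
        push_cast
        field_simp
        ring

lemma tail_sum_le (s : Finset (ℤ × ℤ)) (hs : ∀ p ∈ s, 2 ≤ max p.1.natAbs p.2.natAbs) :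
    ∑ p ∈ s, (((hexQ p : ℝ)) ^ 3)⁻¹ ≤ 3 := by
  set N := s.sup (fun p => max p.1.natAbs p.2.natAbs) with hN
  have hsub : s ⊆ (Finset.Icc 2 N).biUnion (fun k => (box k : Finset (ℤ × ℤ))) := by
    intro p hp
    refine Finset.mem_biUnion.mpr ⟨max p.1.natAbs p.2.natAbs, ?_, ?_⟩
    · exact Finset.mem_Icc.mpr ⟨hs p hp, Finset.le_sup (f := fun p : ℤ × ℤ => max p.1.natAbs p.2.natAbs) hp⟩
    · simp [Int.mem_box]
  have hdisj : (↑(Finset.Icc 2 N) : Set ℕ).PairwiseDisjoint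
      (fun k => (box k : Finset (ℤ × ℤ))) := by
    intro a _ b _ hab
    refine Finset.disjoint_left.mpr ?_
    intro p hpa hpb
    rw [Int.mem_box] at hpa hpb
    exact hab (hpa ▸ hpb ▸ rfl)
  calc ∑ p ∈ s, (((hexQ p : ℝ)) ^ 3)⁻¹
      ≤ ∑ p ∈ (Finset.Icc 2 N).biUnion (fun k => (box k : Finset (ℤ × ℤ))),
          (((hexQ p : ℝ)) ^ 3)⁻¹ := by
        refine Finset.sum_le_sum_of_subset_of_nonneg hsub (fun p _ _ => ?_)
        have := hexQ_nonneg p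
        positivity
    _ = ∑ k ∈ Finset.Icc 2 N, ∑ p ∈ (box k : Finset (ℤ × ℤ)), (((hexQ p : ℝ)) ^ 3)⁻¹ :=
        Finset.sum_biUnion hdisj
    _ ≤ ∑ k ∈ Finset.Icc 2 N, 64 * (((k:ℝ)) ^ 5)⁻¹ := by
        refine Finset.sum_le_sum (fun k hk => box_sum_le ?_)
        have := (Finset.mem_Icc.mp hk).1
        omega
    _ = 64 * ∑ k ∈ Finset.Icc 2 N, (((k:ℝ)) ^ 5)⁻¹ := by rw [Finset.mul_sum]
    _ ≤ 64 * (3/64) := by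
        have := sum_inv_pow5_le N
        linarith
    _ = 3 := by norm_num

lemma hexXi_cube : hexXi ^ 3 = -1 := by linear_combination (hexXi + 1) * hexXi_sq

lemma hexXi_six : hexXi ^ 6 = 1 := by
  linear_combination (hexXi ^ 4 + hexXi ^ 3 - hexXi - 1) * hexXi_sq

lemma hex_one_add : (1 + hexXi) ^ 6 = -27 := by
  linear_combination (hexXi ^ 4 + 7 * hexXi ^ 3 + 21 * hexXi ^ 2 + 34 * hexXi + 28) * hexXi_sq

lemma hex_one_sub : (1 - hexXi) ^ 6 = 1 := by
  linear_combination (hexXi ^ 4 - 5 * hexXi ^ 3 + 9 * hexXi ^ 2 - 6 * hexXi) * hexXi_sq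

lemma global_sum_le (s : Finset (ℤ × ℤ)) (hs : ∀ p ∈ s, p ≠ (0, 0)) :
    ∑ p ∈ s, (((hexQ p : ℝ)) ^ 3)⁻¹ ≤ 11 := by
  classical
  rw [← Finset.sum_filter_add_sum_filter_not s
    (fun p => max p.1.natAbs p.2.natAbs ≤ 1)]
  have h1 : ∑ p ∈ s.filter (fun p => max p.1.natAbs p.2.natAbs ≤ 1),
      (((hexQ p : ℝ)) ^ 3)⁻¹ ≤ 8 := by
    have hsub : s.filter (fun p => max p.1.natAbs p.2.natAbs ≤ 1) ⊆ (box 1 : Finset (ℤ × ℤ)) := by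
      intro p hp
      rw [Finset.mem_filter] at hp
      rw [Int.mem_box]
      have hne := hs p hp.1
      have : max p.1.natAbs p.2.natAbs ≠ 0 := by
        intro h
        rw [Nat.max_eq_zero_iff, Int.natAbs_eq_zero, Int.natAbs_eq_zero] at h
        exact hne (Prod.ext h.1 h.2)
      omega
    calc ∑ p ∈ s.filter (fun p => max p.1.natAbs p.2.natAbs ≤ 1), (((hexQ p : ℝ)) ^ 3)⁻¹
        ≤ ∑ p ∈ (box 1 : Finset (ℤ × ℤ)), (((hexQ p : ℝ)) ^ 3)⁻¹ := by
          refine Finset.sum_le_sum_of_subset_of_nonneg hsub (fun p _ _ => ?_)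
          have := hexQ_nonneg p
          positivity
      _ ≤ (box 1 : Finset (ℤ × ℤ)).card • (1 : ℝ) := by
          refine Finset.sum_le_card_nsmul _ _ _ (fun p hp => ?_)
          have hp0 : p ≠ (0, 0) := by
            rintro rfl
            simp [Int.mem_box] at hp
          have hQ1 : (1 : ℝ) ≤ (hexQ p : ℝ) := by exact_mod_cast hexQ_pos hp0
          have : (1:ℝ) ≤ ((hexQ p : ℝ)) ^ 3 := one_le_pow₀ hQ1
          rw [inv_le_one_iff₀]
          right; exact this
      _ = 8 := by rw [Int.card_box one_ne_zero]; norm_num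
  have h2 : ∑ p ∈ s.filter (fun p => ¬ max p.1.natAbs p.2.natAbs ≤ 1),
      (((hexQ p : ℝ)) ^ 3)⁻¹ ≤ 3 := by
    refine tail_sum_le _ (fun p hp => ?_)
    rw [Finset.mem_filter] at hp
    omega
  linarith

lemma hexQ_term_eq (p : ℤ × ℤ) :
    ‖(((p.1 : ℂ) + (p.2 : ℂ) * Complex.exp ((Real.pi : ℂ) * Complex.I / 3)) ^ 6)⁻¹‖
      = (((hexQ p : ℝ)) ^ 3)⁻¹ := norm_hexTerm p

lemma hex_summable :
    Summable (fun p : {p : ℤ × ℤ // p ≠ (0, 0)} => ‖((hexW p.val) ^ 6)⁻¹‖) := by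
  refine summable_of_sum_le (c := 11) (fun p => norm_nonneg _) (fun u => ?_)
  have himg : ∑ p ∈ u, ‖((hexW p.val) ^ 6)⁻¹‖
      = ∑ q ∈ u.image Subtype.val, (((hexQ q : ℝ)) ^ 3)⁻¹ := by
    rw [Finset.sum_image (fun x _ y _ h => Subtype.ext h)]
    exact Finset.sum_congr rfl (fun p _ => norm_hexTerm p.val)
  rw [himg]
  refine global_sum_le _ (fun q hq => ?_)
  obtain ⟨p, _, rfl⟩ := Finset.mem_image.mp hq
  exact p.property

lemma box_one_eq : (box 1 : Finset (ℤ × ℤ)) =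
    {((1:ℤ),(0:ℤ)), (-1,0), (0,1), (0,-1), (1,-1), (-1,1), (1,1), (-1,-1)} := by
  ext p
  simp only [Int.mem_box, Finset.mem_insert, Finset.mem_singleton, Prod.ext_iff]
  omega

lemma hexF_sum : ∑ p ∈ (box 1 : Finset (ℤ × ℤ)), ((hexW p) ^ 6)⁻¹ = 160/27 := by
  rw [box_one_eq]
  rw [Finset.sum_insert (by decide), Finset.sum_insert (by decide), Finset.sum_insert (by decide),
    Finset.sum_insert (by decide), Finset.sum_insert (by decide), Finset.sum_insert (by decide),
    Finset.sum_insert (by decide), Finset.sum_singleton]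
  have w1 : hexW (1,0) = 1 := by simp [hexW]
  have w2 : hexW (-1,0) = -1 := by simp [hexW]
  have w3 : hexW (0,1) = hexXi := by simp [hexW]
  have w4 : hexW (0,-1) = -hexXi := by simp [hexW]
  have w5 : hexW (1,-1) = 1 - hexXi := by simp [hexW]; ring
  have w6 : hexW (-1,1) = -(1 - hexXi) := by simp [hexW]; ring
  have w7 : hexW (1,1) = 1 + hexXi := by simp [hexW]
  have w8 : hexW (-1,-1) = -(1 + hexXi) := by simp [hexW]; ring
  rw [w1, w2, w3, w4, w5, w6, w7, w8]
  simp only [Even.neg_pow (by decide : Even 6)]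
  rw [hexXi_six, hex_one_add, hex_one_sub, one_pow]
  norm_num

def hexInv (p : {p : ℤ × ℤ // p ≠ (0, 0)}) : {p : ℤ × ℤ // p ≠ (0, 0)} :=
  ⟨(p.val.1 + p.val.2, -p.val.2), fun h => p.property (by
    rw [Prod.ext_iff] at h
    obtain ⟨h1, h2⟩ := h
    simp only at h1 h2
    have hv2 : p.val.2 = 0 := by omega
    have hv1 : p.val.1 = 0 := by omega
    exact Prod.ext hv1 hv2)⟩

lemma hexInv_invol : Function.Involutive hexInv := by
  intro p
  apply Subtype.ext
  apply Prod.ext <;> simp [hexInv]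

lemma conj_hexTerm (p : {p : ℤ × ℤ // p ≠ (0, 0)}) :
    (starRingEnd ℂ) (((hexW p.val) ^ 6)⁻¹) = ((hexW (hexInv p).val) ^ 6)⁻¹ := by
  rw [map_inv₀, map_pow]
  congr 1
  simp only [hexW, map_add, map_mul, map_intCast, conj_hexXi, hexInv]
  push_cast
  ring

/-- The Eisenstein-type series `Σ_{(m,n) ≠ (0,0)} (m + n e^{iπ/3})⁻⁶` converges absolutely
and its value is a strictly positive real number. -/
theorem eisenstein_hexagonal_positive :
    Summable (fun p : {p : ℤ × ℤ // p ≠ (0, 0)} =>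
      ‖(((p.val.1 : ℂ) + (p.val.2 : ℂ) * Complex.exp ((Real.pi : ℂ) * Complex.I / 3)) ^ 6)⁻¹‖) ∧
    ∃ r : ℝ, 0 < r ∧
      (∑' p : {p : ℤ × ℤ // p ≠ (0, 0)},
        (((p.val.1 : ℂ) + (p.val.2 : ℂ) * Complex.exp ((Real.pi : ℂ) * Complex.I / 3)) ^ 6)⁻¹)
        = (r : ℂ) := by
  classical
  constructor
  · exact hex_summable
  · set T : {p : ℤ × ℤ // p ≠ (0, 0)} → ℂ := fun p => ((hexW p.val) ^ 6)⁻¹ with hT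
    have hsum : Summable T := hex_summable.of_norm
    set S : ℂ := ∑' p, T p with hS
    -- S is real
    have hconjS : (starRingEnd ℂ) S = S := by
      have h1 : (starRingEnd ℂ) S = ∑' p, (starRingEnd ℂ) (T p) := by
        have := (hsum.hasSum.mapL (Complex.conjCLE : ℂ →L[ℝ] ℂ)).tsum_eq
        simpa [Complex.conjCLE_apply] using this.symm
      rw [h1]
      have h2 : ∀ p, (starRingEnd ℂ) (T p) = T (hexInv p) := fun p => conj_hexTerm p
      simp_rw [h2]
      exact Equiv.tsum_eq (hexInv_invol.toPerm hexInv) T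
    have hreal : S = ((S.re : ℝ) : ℂ) := (Complex.conj_eq_iff_re.mp hconjS).symm
    -- the finite part
    set F : Finset {p : ℤ × ℤ // p ≠ (0, 0)} :=
      Finset.subtype _ (box 1 : Finset (ℤ × ℤ)) with hF
    have hre_summ : Summable (fun p => (T p).re) := (hsum.hasSum.mapL Complex.reCLM).summable
    have hFsum : ∑ p ∈ F, (T p).re = 160/27 := by
      rw [← Complex.re_sum]
      have e1 : ∑ x ∈ Finset.subtype (fun q => q ≠ ((0:ℤ),(0:ℤ))) (box 1),
          ((hexW x.val) ^ 6)⁻¹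
          = ∑ x ∈ (box 1 : Finset (ℤ × ℤ)).filter (fun q => q ≠ (0,0)), ((hexW x) ^ 6)⁻¹ :=
        Finset.sum_subtype_eq_sum_filter (fun q : ℤ × ℤ => ((hexW q) ^ 6)⁻¹)
      have e2 : (box 1 : Finset (ℤ × ℤ)).filter (fun q => q ≠ (0,0)) = box 1 := by
        refine Finset.filter_true_of_mem (fun q hq => ?_)
        rintro rfl
        simp [Int.mem_box] at hq
      have : ∑ p ∈ F, T p = ∑ q ∈ (box 1 : Finset (ℤ × ℤ)), ((hexW q) ^ 6)⁻¹ := by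
        rw [hF]
        exact e1.trans (by rw [e2])
      rw [this, hexF_sum]
      norm_num
    -- the tail
    have htail_norm : ∑' (x : {x : {p : ℤ × ℤ // p ≠ (0, 0)} // x ∉ F}), ‖T x.val‖ ≤ 3 := by
      refine Summable.tsum_le_of_sum_le ?_ (fun u => ?_)
      · exact (hex_summable.subtype _)
      · have hinj : ∀ x ∈ u, ∀ y ∈ u,
            (x.val.val : ℤ × ℤ) = y.val.val → x = y :=
          fun x _ y _ h => Subtype.ext (Subtype.ext h)
        have : ∑ x ∈ u, ‖T x.val‖
            = ∑ q ∈ u.image (fun x => x.val.val), (((hexQ q : ℝ)) ^ 3)⁻¹ := by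
          rw [Finset.sum_image hinj]
          exact Finset.sum_congr rfl (fun x _ => norm_hexTerm x.val.val)
        rw [this]
        refine tail_sum_le _ (fun q hq => ?_)
        obtain ⟨x, _, rfl⟩ := Finset.mem_image.mp hq
        have h1 : x.val.val ∉ (box 1 : Finset (ℤ × ℤ)) := by
          intro hmem
          exact x.property (Finset.mem_subtype.mpr hmem)
        have h0 : x.val.val ≠ (0, 0) := x.val.property
        rw [Int.mem_box] at h1
        have hne0 : max x.val.val.1.natAbs x.val.val.2.natAbs ≠ 0 := by
          intro h
          rw [Nat.max_eq_zero_iff, Int.natAbs_eq_zero, Int.natAbs_eq_zero] at h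
          exact h0 (Prod.ext h.1 h.2)
        omega
    have htail : -3 ≤ ∑' (x : {x : {p : ℤ × ℤ // p ≠ (0, 0)} // x ∉ F}), (T x.val).re := by
      have hle : ∀ x : {x : {p : ℤ × ℤ // p ≠ (0, 0)} // x ∉ F},
          -‖T x.val‖ ≤ (T x.val).re := by
        intro x
        have h1 := Complex.abs_re_le_norm (T x.val)
        have h2 := neg_abs_le (T x.val).re
        linarith
      have hsn : Summable (fun x : {x : {p : ℤ × ℤ // p ≠ (0, 0)} // x ∉ F} => -‖T x.val‖) :=
        (hex_summable.subtype _).neg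
      have := Summable.tsum_le_tsum hle hsn (hre_summ.subtype _)
      rw [tsum_neg] at this
      linarith
    have hsplit := Summable.sum_add_tsum_subtype_compl hre_summ F
    have hSre : S.re = ∑' p, (T p).re := Complex.re_tsum hsum
    have hpos : 0 < S.re := by
      rw [hSre, ← hsplit, hFsum]
      linarith
    exact ⟨S.re, hpos, hreal ▸ rfl⟩
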